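/- Let ε = 1 or ε = -1, let b, c, ξ : ℝ → ℝ be smooth, let η : ℝ → ℝ be smooth with η(t) ≠ 0 and η'(t) = b(t) η(t) for all t, and let β : ℝ → ℝ be smooth with β'(t) = −ε ξ(t)²/η(t)² for all t. If F : ℝ × ℝ → ℝ is smooth and satisfies ∂z(∂t F + F ∂z F + ∂z² F) = 2 ε c(t) for all (z,t), then the function u(x,y,t) := −c(t) y² + (ξ'(t)/η(t)) y + F(x − (ξ(t)/η(t)) y + β(t), t) satisfies ∂x(∂t u + u ∂x u + ∂x² u) + ε ∂y² u + b(t) y ∂x ∂y u + c(t) y² ∂x² u = 0 for all (x,y,t). -/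

import Mathlib

/-- Partial derivative in the first (`x`) variable. -/
noncomputable def pdx (u : ℝ → ℝ → ℝ → ℝ) : ℝ → ℝ → ℝ → ℝ :=
  fun x y t => deriv (fun s => u s y t) x

/-- Partial derivative in the second (`y`) variable. -/
noncomputable def pdy (u : ℝ → ℝ → ℝ → ℝ) : ℝ → ℝ → ℝ → ℝ :=
  fun x y t => deriv (fun s => u x s t) y

/-- Partial derivative in the third (`t`) variable. -/
noncomputable def pdt (u : ℝ → ℝ → ℝ → ℝ) : ℝ → ℝ → ℝ → ℝ :=
  fun x y t => deriv (fun s => u x y s) t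

/-- Partial derivative of a function of two variables `(z,t)` in the first variable `z`. -/
noncomputable def pz (F : ℝ → ℝ → ℝ) : ℝ → ℝ → ℝ :=
  fun z t => deriv (fun s => F s t) z

/-- Partial derivative of a function of two variables `(z,t)` in the second variable `t`. -/
noncomputable def pt (F : ℝ → ℝ → ℝ) : ℝ → ℝ → ℝ :=
  fun z t => deriv (fun s => F z s) t

noncomputable def p1 (H : ℝ × ℝ → ℝ) : ℝ × ℝ → ℝ := fun p => fderiv ℝ H p (1, 0)
noncomputable def p2 (H : ℝ × ℝ → ℝ) : ℝ × ℝ → ℝ := fun p => fderiv ℝ H p (0, 1)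

lemma contDiff_p1 {H : ℝ × ℝ → ℝ} (hH : ContDiff ℝ (⊤ : ℕ∞) H) :
    ContDiff ℝ (⊤ : ℕ∞) (p1 H) :=
  (hH.fderiv_right (by exact_mod_cast le_top)).clm_apply contDiff_const

lemma contDiff_p2 {H : ℝ × ℝ → ℝ} (hH : ContDiff ℝ (⊤ : ℕ∞) H) :
    ContDiff ℝ (⊤ : ℕ∞) (p2 H) :=
  (hH.fderiv_right (by exact_mod_cast le_top)).clm_apply contDiff_const

lemma hasDerivAt_comp2 {H : ℝ × ℝ → ℝ} (hH : ContDiff ℝ (⊤ : ℕ∞) H)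
    {φ ψ : ℝ → ℝ} {φ' ψ' s : ℝ}
    (hφ : HasDerivAt φ φ' s) (hψ : HasDerivAt ψ ψ' s) :
    HasDerivAt (fun r => H (φ r, ψ r))
      (φ' * p1 H (φ s, ψ s) + ψ' * p2 H (φ s, ψ s)) s := by
  have h := (hH.differentiable (by simp) (φ s, ψ s)).hasFDerivAt.comp_hasDerivAt
    s (hφ.prodMk hψ)
  convert h using 1 <;> try rfl
  have hv : ((φ', ψ') : ℝ × ℝ) = φ' • ((1:ℝ), (0:ℝ)) + ψ' • ((0:ℝ), (1:ℝ)) := by simp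
  rw [hv, map_add, map_smul, map_smul]
  simp [p1, p2]

lemma hasDerivAt_slice1 {H : ℝ × ℝ → ℝ} (hH : ContDiff ℝ (⊤ : ℕ∞) H) (z t : ℝ) :
    HasDerivAt (fun s => H (s, t)) (p1 H (z, t)) z := by
  simpa using hasDerivAt_comp2 hH (hasDerivAt_id z) (hasDerivAt_const z t)

lemma hasDerivAt_slice2 {H : ℝ × ℝ → ℝ} (hH : ContDiff ℝ (⊤ : ℕ∞) H) (z t : ℝ) :
    HasDerivAt (fun s => H (z, s)) (p2 H (z, t)) t := by
  simpa using hasDerivAt_comp2 hH (hasDerivAt_const t z) (hasDerivAt_id t)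


theorem stmt9 (ε : ℝ) (hε : ε = 1 ∨ ε = -1)
    (b c ξ : ℝ → ℝ)
    (hb : ContDiff ℝ (⊤ : ℕ∞) b) (hc : ContDiff ℝ (⊤ : ℕ∞) c)
    (hξ : ContDiff ℝ (⊤ : ℕ∞) ξ)
    (η : ℝ → ℝ) (hη : ContDiff ℝ (⊤ : ℕ∞) η) (hη0 : ∀ t, η t ≠ 0)
    (hη' : ∀ t, deriv η t = b t * η t)
    (β : ℝ → ℝ) (hβ : ContDiff ℝ (⊤ : ℕ∞) β)
    (hβ' : ∀ t, deriv β t = -ε * (ξ t) ^ 2 / (η t) ^ 2)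
    (F : ℝ → ℝ → ℝ)
    (hF : ContDiff ℝ (⊤ : ℕ∞) (fun p : ℝ × ℝ => F p.1 p.2))
    (hFeq : ∀ z t : ℝ,
      pz (fun z t => pt F z t + F z t * pz F z t + pz (pz F) z t) z t = 2 * ε * c t)
    (u : ℝ → ℝ → ℝ → ℝ)
    (hudef : ∀ x y t, u x y t =
      -c t * y ^ 2 + deriv ξ t / η t * y + F (x - ξ t / η t * y + β t) t) :
    ∀ x y t : ℝ,
      pdx (fun x y t => pdt u x y t + u x y t * pdx u x y t + pdx (pdx u) x y t) x y t
        + ε * pdy (pdy u) x y t + b t * y * pdx (pdy u) x y t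
        + c t * y ^ 2 * pdx (pdx u) x y t = 0 := by
  intro x y t
  set G : ℝ × ℝ → ℝ := fun p => F p.1 p.2 with hGdef
  set P : ℝ × ℝ → ℝ := p1 G with hPdef
  set Q : ℝ × ℝ → ℝ := p1 P with hQdef
  set R : ℝ × ℝ → ℝ := p1 Q with hRdef
  set T : ℝ × ℝ → ℝ := p2 G with hTdef
  set PT : ℝ × ℝ → ℝ := p1 T with hPTdef
  have hPc : ContDiff ℝ (⊤ : ℕ∞) P := contDiff_p1 hF
  have hQc : ContDiff ℝ (⊤ : ℕ∞) Q := contDiff_p1 hPc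
  have hRc : ContDiff ℝ (⊤ : ℕ∞) R := contDiff_p1 hQc
  have hTc : ContDiff ℝ (⊤ : ℕ∞) T := contDiff_p2 hF
  have hPTc : ContDiff ℝ (⊤ : ℕ∞) PT := contDiff_p1 hTc
  -- bridges from pz/pt to p1/p2
  have hpzF : ∀ z t : ℝ, pz F z t = P (z, t) := fun z t => (hasDerivAt_slice1 hF z t).deriv
  have hptF : ∀ z t : ℝ, pt F z t = T (z, t) := fun z t => (hasDerivAt_slice2 hF z t).deriv
  have hpz2 : ∀ z t : ℝ, pz (pz F) z t = Q (z, t) := by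
    intro z t
    have h1 : (fun s => pz F s t) = fun s => P (s, t) := funext fun s => hpzF s t
    show deriv (fun s => pz F s t) z = _
    rw [h1]
    exact (hasDerivAt_slice1 hPc z t).deriv
  -- the fully reduced equation in p1/p2 form
  have hFeq' : ∀ z t : ℝ,
      PT (z, t) + P (z, t) ^ 2 + G (z, t) * Q (z, t) + R (z, t) = 2 * ε * c t := by
    intro z t
    have h0 := hFeq z t
    have h1 : (fun s => pt F s t + F s t * pz F s t + pz (pz F) s t)
        = fun s => T (s, t) + G (s, t) * P (s, t) + Q (s, t) := by
      funext s
      rw [hptF, hpzF, hpz2]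
    have h2 : pz (fun z t => pt F z t + F z t * pz F z t + pz (pz F) z t) z t
        = PT (z, t) + (P (z, t) * P (z, t) + G (z, t) * Q (z, t)) + R (z, t) := by
      show deriv (fun s => pt F s t + F s t * pz F s t + pz (pz F) s t) z = _
      rw [h1]
      exact (((hasDerivAt_slice1 hTc z t).add
        ((hasDerivAt_slice1 hF z t).mul (hasDerivAt_slice1 hPc z t))).add
        (hasDerivAt_slice1 hQc z t)).deriv
    rw [h2] at h0
    nlinarith [h0]
  -- abbreviations
  set A : ℝ → ℝ := fun s => ξ s / η s with hAdef
  set D : ℝ → ℝ := fun s => deriv ξ s / η s with hDdef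
  have hu : ∀ x' y' t' : ℝ, u x' y' t'
      = -c t' * y' ^ 2 + D t' * y' + G (x' - A t' * y' + β t', t') := by
    intro x' y' t'; rw [hudef]
  have hξd : Differentiable ℝ ξ := hξ.differentiable (by simp)
  have hηd : Differentiable ℝ η := hη.differentiable (by simp)
  have hξ' : ContDiff ℝ (⊤ : ℕ∞) (deriv ξ) := by
    have := (contDiff_infty_iff_deriv.mp (by exact_mod_cast hξ)).2
    exact_mod_cast this
  have hDc : ContDiff ℝ (⊤ : ℕ∞) D := hξ'.div hη hη0
  have hDd : Differentiable ℝ D := hDc.differentiable (by simp)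
  have hcd : Differentiable ℝ c := hc.differentiable (by simp)
  have hβd : Differentiable ℝ β := hβ.differentiable (by simp)
  -- derivative of A
  have hAder : ∀ t' : ℝ, HasDerivAt A (D t' - b t' * A t') t' := by
    intro t'
    have h := (hξd t').hasDerivAt.div (hηd t').hasDerivAt (hη0 t')
    convert h using 1 <;> try rfl
    have hne := hη0 t'
    rw [hη']
    show deriv ξ t' / η t' - b t' * (ξ t' / η t') = _
    field_simp
  -- derivative of β
  have hβder : ∀ t' : ℝ, HasDerivAt β (-ε * A t' ^ 2) t' := by
    intro t'
    have h := (hβd t').hasDerivAt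
    rw [hβ' t'] at h
    convert h using 1 <;> try rfl
    rw [hAdef]
    field_simp
  -- ∂x u
  have h1 : ∀ x' y' : ℝ, pdx u x' y' t = P (x' - A t * y' + β t, t) := by
    intro x' y'
    have he : (fun s => u s y' t) = fun s => -c t * y' ^ 2 + D t * y'
        + G (s - A t * y' + β t, t) := funext fun s => hu s y' t
    show deriv (fun s => u s y' t) x' = _
    rw [he]
    have hz : HasDerivAt (fun s : ℝ => s - A t * y' + β t) 1 x' := by
      simpa using ((hasDerivAt_id x').sub_const (A t * y')).add_const (β t)
    have := ((hasDerivAt_const x' (-c t * y' ^ 2 + D t * y')).add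
      (hasDerivAt_comp2 hF hz (hasDerivAt_const x' t))).deriv
    simpa [add_assoc, Pi.add_def] using this
  -- ∂x∂x u
  have h2 : ∀ x' y' : ℝ, pdx (pdx u) x' y' t = Q (x' - A t * y' + β t, t) := by
    intro x' y'
    have he : (fun s => pdx u s y' t) = fun s => P (s - A t * y' + β t, t) :=
      funext fun s => h1 s y'
    show deriv (fun s => pdx u s y' t) x' = _
    rw [he]
    have hz : HasDerivAt (fun s : ℝ => s - A t * y' + β t) 1 x' := by
      simpa using ((hasDerivAt_id x').sub_const (A t * y')).add_const (β t)
    have := (hasDerivAt_comp2 hPc hz (hasDerivAt_const x' t)).deriv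
    simpa using this
  -- ∂y u
  have h4 : ∀ x' y' : ℝ, pdy u x' y' t
      = -2 * c t * y' + D t - A t * P (x' - A t * y' + β t, t) := by
    intro x' y'
    have he : (fun s => u x' s t) = fun s => -c t * s ^ 2 + D t * s
        + G (x' - A t * s + β t, t) := funext fun s => hu x' s t
    show deriv (fun s => u x' s t) y' = _
    rw [he]
    have hz : HasDerivAt (fun s : ℝ => x' - A t * s + β t) (-A t) y' := by
      simpa using (((hasDerivAt_id y').const_mul (A t)).const_sub x').add_const (β t)
    have hg : HasDerivAt (fun s : ℝ => -c t * s ^ 2 + D t * s)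
        (-c t * (2 * y') + D t) y' := by
      have := ((hasDerivAt_pow 2 y').const_mul (-c t)).add ((hasDerivAt_id y').const_mul (D t))
      simpa [Pi.add_def] using this
    have := (hg.add (hasDerivAt_comp2 hF hz (hasDerivAt_const y' t))).deriv
    simp only [Pi.add_def, Pi.sub_def] at this
    rw [this]
    ring
  -- ∂y∂y u
  have h5 : pdy (pdy u) x y t = -2 * c t + A t ^ 2 * Q (x - A t * y + β t, t) := by
    have he : (fun s => pdy u x s t) = fun s => -2 * c t * s + D t
        - A t * P (x - A t * s + β t, t) := funext fun s => h4 x s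
    show deriv (fun s => pdy u x s t) y = _
    rw [he]
    have hz : HasDerivAt (fun s : ℝ => x - A t * s + β t) (-A t) y := by
      simpa using (((hasDerivAt_id y).const_mul (A t)).const_sub x).add_const (β t)
    have hg : HasDerivAt (fun s : ℝ => -2 * c t * s + D t) (-2 * c t) y := by
      simpa using ((hasDerivAt_id y).const_mul (-2 * c t)).add_const (D t)
    have hcomp := (hasDerivAt_comp2 hPc hz (hasDerivAt_const y t)).const_mul (A t)
    have := (hg.sub hcomp).deriv
    simp only [Pi.add_def, Pi.sub_def] at this
    rw [this]
    ring
  -- ∂x∂y u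
  have h6 : pdx (pdy u) x y t = -(A t) * Q (x - A t * y + β t, t) := by
    have he : (fun s => pdy u s y t) = fun s => -2 * c t * y + D t
        - A t * P (s - A t * y + β t, t) := funext fun s => h4 s y
    show deriv (fun s => pdy u s y t) x = _
    rw [he]
    have hz : HasDerivAt (fun s : ℝ => s - A t * y + β t) 1 x := by
      simpa using ((hasDerivAt_id x).sub_const (A t * y)).add_const (β t)
    have hcomp := (hasDerivAt_comp2 hPc hz (hasDerivAt_const x t)).const_mul (A t)
    have := ((hasDerivAt_const x (-2 * c t * y + D t)).sub hcomp).deriv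
    simp only [Pi.add_def, Pi.sub_def] at this
    rw [this]
    ring
  -- ∂t u
  have h7 : ∀ x' : ℝ, pdt u x' y t
      = -deriv c t * y ^ 2 + deriv D t * y
        + ((-(D t - b t * A t) * y + -ε * A t ^ 2) * P (x' - A t * y + β t, t)
            + T (x' - A t * y + β t, t)) := by
    intro x'
    have he : (fun s => u x' y s) = fun s => -c s * y ^ 2 + D s * y
        + G (x' - A s * y + β s, s) := funext fun s => hu x' y s
    show deriv (fun s => u x' y s) t = _
    rw [he]
    have hz : HasDerivAt (fun s : ℝ => x' - A s * y + β s)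
        (-(D t - b t * A t) * y + -ε * A t ^ 2) t := by
      have := (((hAder t).mul_const y).const_sub x').add (hβder t)
      convert this using 1 <;> try rfl
      ring
    have hg : HasDerivAt (fun s : ℝ => -c s * y ^ 2 + D s * y)
        (-deriv c t * y ^ 2 + deriv D t * y) t := by
      have h1 := ((hcd t).hasDerivAt.neg.mul_const (y ^ 2)).add ((hDd t).hasDerivAt.mul_const y)
      simpa [Pi.add_def, Pi.mul_def] using h1
    have hcomp := hasDerivAt_comp2 hF hz (hasDerivAt_id' (x := t))
    have := (hg.add hcomp).deriv
    simp only [Pi.add_def, Pi.sub_def] at this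
    rw [this]
    ring_nf
    rfl
  -- main ∂x of the bracket
  have h8 : pdx (fun x y t => pdt u x y t + u x y t * pdx u x y t + pdx (pdx u) x y t) x y t
      = (-(D t - b t * A t) * y + -ε * A t ^ 2) * Q (x - A t * y + β t, t)
        + PT (x - A t * y + β t, t)
        + (P (x - A t * y + β t, t) * P (x - A t * y + β t, t)
            + (-c t * y ^ 2 + D t * y + G (x - A t * y + β t, t)) * Q (x - A t * y + β t, t))
        + R (x - A t * y + β t, t) := by
    have he : (fun s => pdt u s y t + u s y t * pdx u s y t + pdx (pdx u) s y t)
        = fun s => (-deriv c t * y ^ 2 + deriv D t * y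
            + ((-(D t - b t * A t) * y + -ε * A t ^ 2) * P (s - A t * y + β t, t)
              + T (s - A t * y + β t, t)))
          + (-c t * y ^ 2 + D t * y + G (s - A t * y + β t, t)) * P (s - A t * y + β t, t)
          + Q (s - A t * y + β t, t) := by
      funext s
      rw [h7 s, hu s y t, h1 s y, h2 s y]
    show deriv (fun s => pdt u s y t + u s y t * pdx u s y t + pdx (pdx u) s y t) x = _
    rw [he]
    have hz : HasDerivAt (fun s : ℝ => s - A t * y + β t) 1 x := by
      simpa using ((hasDerivAt_id x).sub_const (A t * y)).add_const (β t)
    have hzc := hasDerivAt_const x t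
    have hPs : HasDerivAt (fun s : ℝ => P (s - A t * y + β t, t))
        (Q (x - A t * y + β t, t)) x := by
      simpa using hasDerivAt_comp2 hPc hz hzc
    have hGs : HasDerivAt (fun s : ℝ => G (s - A t * y + β t, t))
        (P (x - A t * y + β t, t)) x := by
      simpa using hasDerivAt_comp2 hF hz hzc
    have hTs : HasDerivAt (fun s : ℝ => T (s - A t * y + β t, t))
        (PT (x - A t * y + β t, t)) x := by
      simpa using hasDerivAt_comp2 hTc hz hzc
    have hQs : HasDerivAt (fun s : ℝ => Q (s - A t * y + β t, t))
        (R (x - A t * y + β t, t)) x := by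
      simpa using hasDerivAt_comp2 hQc hz hzc
    have hfirst : HasDerivAt (fun s : ℝ => -deriv c t * y ^ 2 + deriv D t * y
        + ((-(D t - b t * A t) * y + -ε * A t ^ 2) * P (s - A t * y + β t, t)
          + T (s - A t * y + β t, t)))
        ((-(D t - b t * A t) * y + -ε * A t ^ 2) * Q (x - A t * y + β t, t)
          + PT (x - A t * y + β t, t)) x := by
      have := (hasDerivAt_const x (-deriv c t * y ^ 2 + deriv D t * y)).add
        ((hPs.const_mul (-(D t - b t * A t) * y + -ε * A t ^ 2)).add hTs)
      simpa [Pi.add_def, Pi.mul_def] using this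
    have hsecond : HasDerivAt (fun s : ℝ =>
        (-c t * y ^ 2 + D t * y + G (s - A t * y + β t, t)) * P (s - A t * y + β t, t))
        (P (x - A t * y + β t, t) * P (x - A t * y + β t, t)
          + (-c t * y ^ 2 + D t * y + G (x - A t * y + β t, t)) * Q (x - A t * y + β t, t))
        x := by
      have := ((hasDerivAt_const x (-c t * y ^ 2 + D t * y)).add hGs).mul hPs
      simpa [Pi.add_def, Pi.mul_def] using this
    exact ((hfirst.add hsecond).add hQs).deriv
  -- put everything together
  rw [h8, h5, h6, h2 x y]
  have key := hFeq' (x - A t * y + β t) t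
  nlinarith [key, sq_nonneg (Q (x - A t * y + β t, t))]
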